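/- arXiv:1610.07415 — 2 statements merged into one kernel-verified Lean document; each statement's English description precedes it below -/
import Mathlib

section
/- The variational functional F is strictly decreasing on the interval (1/4, ∞). Consequently every maximizer r_β of F over [0,∞) satisfies 0 ≤ r_β ≤ 1/4, and sup_{r ≥ 0} F(r) = sup_{r ∈ [0,1/4]} F(r). -/
open Real Filter

/-- `g_{r,x} := sqrt((x + λ_s − μ_s)² + γ_s²·r)`. -/
noncomputable def gg (gams lams mus r x : ℝ) : ℝ :=
  Real.sqrt ((x + lams - mus) ^ 2 + gams ^ 2 * r)

/-- The function `f` from Theorem 1 of the paper. Parameters: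
`beta` = β, `gams` = γ_s, `lams` = λ_s, `lamf` = λ_f, `lam` = λ,
`mus` = μ_s, `muf` = μ_f, `hs` = h_s, `hf` = h_f, `eta` = η. -/
noncomputable def ff (beta gams lams lamf lam mus muf hs hf eta r : ℝ) : ℝ :=
  (Real.exp (-(beta * muf)) + Real.exp (-(beta * (4 * lam + 2 * lamf - muf))))
      * Real.cosh (beta * hs)
    + Real.exp (-(beta * (2 * lam - hs))) * Real.cosh (beta * (eta + hf))
    + Real.exp (-(beta * (2 * lam + hs))) * Real.cosh (beta * (eta - hf))
    + Real.exp (-(beta * (lams + muf))) * Real.cosh (beta * gg gams lams mus r 0)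
    + Real.exp (-(beta * (4 * lam + lams + 2 * lamf - muf)))
      * Real.cosh (beta * gg gams lams mus r (4 * lam))
    + 2 * Real.exp (-(beta * (2 * lam + lams))) * Real.cosh (beta * hf)
      * Real.cosh (beta * gg gams lams mus r (2 * lam))

/-- The variational functional `F(r) := −γ_s·r + β⁻¹·ln f(r)`. -/
noncomputable def FF (beta gams lams lamf lam mus muf hs hf eta r : ℝ) : ℝ :=
  -(gams * r) + beta⁻¹ * Real.log (ff beta gams lams lamf lam mus muf hs hf eta r)

lemma cosh_mul_exp_bound {a b d : ℝ} (ha : a ≤ b + d) (hb : 0 ≤ b) (hd : 0 ≤ d) (ha0 : 0 ≤ a) :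
    Real.cosh a ≤ Real.cosh b * Real.exp d := by
  have h1 : Real.cosh a ≤ Real.cosh (b + d) := by
    rw [Real.cosh_le_cosh, abs_of_nonneg ha0, abs_of_nonneg (by linarith : (0:ℝ) ≤ b + d)]
    exact ha
  have hsb : Real.sinh b ≤ Real.cosh b := by
    nlinarith [Real.cosh_sub_sinh b, Real.exp_pos (-b)]
  have hsd : 0 ≤ Real.sinh d := Real.sinh_nonneg_iff.mpr hd
  have h2 : Real.cosh (b + d) ≤ Real.cosh b * Real.exp d := by
    rw [Real.cosh_add, ← Real.cosh_add_sinh d]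
    nlinarith
  linarith

lemma gams_sqrt_le_gg {gams lams mus r x : ℝ} (hg : 0 ≤ gams) (hr : 0 ≤ r) :
    gams * Real.sqrt r ≤ gg gams lams mus r x := by
  rw [gg, show gams * Real.sqrt r = Real.sqrt (gams ^ 2 * r) by
    rw [Real.sqrt_mul (sq_nonneg _), Real.sqrt_sq hg]]
  exact Real.sqrt_le_sqrt (by nlinarith [sq_nonneg (x + lams - mus)])

lemma gg_le_add {gams lams mus r1 r2 x : ℝ} (hg : 0 < gams) (hr1 : 0 < r1) (h12 : r1 ≤ r2) :
    gg gams lams mus r2 x ≤ gg gams lams mus r1 x + gams * (r2 - r1) / (2 * Real.sqrt r1) := by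
  set c := gams * (r2 - r1) / (2 * Real.sqrt r1) with hcdef
  have hs1 : 0 < Real.sqrt r1 := Real.sqrt_pos.mpr hr1
  have hc0 : 0 ≤ c := div_nonneg (mul_nonneg hg.le (by linarith)) (by positivity)
  have hcs : c * (2 * Real.sqrt r1) = gams * (r2 - r1) := div_mul_cancel₀ _ (by positivity)
  have hg1 : gams * Real.sqrt r1 ≤ gg gams lams mus r1 x := gams_sqrt_le_gg hg.le hr1.le
  have hgn : 0 ≤ gg gams lams mus r1 x := Real.sqrt_nonneg _
  have hsq1 : gg gams lams mus r1 x ^ 2 = (x + lams - mus) ^ 2 + gams ^ 2 * r1 :=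
    Real.sq_sqrt (by positivity)
  have key : (x + lams - mus) ^ 2 + gams ^ 2 * r2 ≤ (gg gams lams mus r1 x + c) ^ 2 := by
    have hcs2 : gams * (c * (2 * Real.sqrt r1)) = gams ^ 2 * (r2 - r1) := by rw [hcs]; ring
    nlinarith [mul_le_mul_of_nonneg_right hg1 hc0, sq_nonneg c]
  calc gg gams lams mus r2 x = Real.sqrt ((x + lams - mus) ^ 2 + gams ^ 2 * r2) := rfl
    _ ≤ Real.sqrt ((gg gams lams mus r1 x + c) ^ 2) := Real.sqrt_le_sqrt key
    _ = gg gams lams mus r1 x + c := Real.sqrt_sq (by linarith)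

lemma ff_pos (beta gams lams lamf lam mus muf hs hf eta r : ℝ) :
    0 < ff beta gams lams lamf lam mus muf hs hf eta r := by
  unfold ff
  have c1 := Real.cosh_pos (beta * hs)
  have c2 := Real.cosh_pos (beta * (eta + hf))
  have c3 := Real.cosh_pos (beta * (eta - hf))
  have c4 := Real.cosh_pos (beta * gg gams lams mus r 0)
  have c5 := Real.cosh_pos (beta * gg gams lams mus r (4 * lam))
  have c6 := Real.cosh_pos (beta * gg gams lams mus r (2 * lam))
  have c7 := Real.cosh_pos (beta * hf)
  have e1 := Real.exp_pos (-(beta * muf))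
  have e2 := Real.exp_pos (-(beta * (4 * lam + 2 * lamf - muf)))
  have e3 := Real.exp_pos (-(beta * (2 * lam - hs)))
  have e4 := Real.exp_pos (-(beta * (2 * lam + hs)))
  have e5 := Real.exp_pos (-(beta * (lams + muf)))
  have e6 := Real.exp_pos (-(beta * (4 * lam + lams + 2 * lamf - muf)))
  have e7 := Real.exp_pos (-(beta * (2 * lam + lams)))
  positivity

lemma sum6_le {E a1 a2 a3 b4 b5 b6 c4 c5 c6 : ℝ} (hE : 1 ≤ E)
    (h1 : 0 ≤ a1) (h2 : 0 ≤ a2) (h3 : 0 ≤ a3)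
    (h4 : b4 ≤ E * c4) (h5 : b5 ≤ E * c5) (h6 : b6 ≤ E * c6) :
    a1 + a2 + a3 + b4 + b5 + b6 ≤ E * (a1 + a2 + a3 + c4 + c5 + c6) := by
  nlinarith [mul_nonneg (sub_nonneg.mpr hE) h1, mul_nonneg (sub_nonneg.mpr hE) h2,
    mul_nonneg (sub_nonneg.mpr hE) h3]

lemma ff_le (beta gams lams lamf lam mus muf hs hf eta : ℝ) {r1 r2 : ℝ}
    (hbeta : 0 < beta) (hgams : 0 < gams) (hr1 : 0 < r1) (h12 : r1 ≤ r2) :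
    ff beta gams lams lamf lam mus muf hs hf eta r2 ≤
      Real.exp (beta * (gams * (r2 - r1) / (2 * Real.sqrt r1))) *
        ff beta gams lams lamf lam mus muf hs hf eta r1 := by
  set c := gams * (r2 - r1) / (2 * Real.sqrt r1) with hcdef
  have hs1 : 0 < Real.sqrt r1 := Real.sqrt_pos.mpr hr1
  have hc0 : 0 ≤ c := div_nonneg (mul_nonneg hgams.le (by linarith)) (by positivity)
  have hE : 1 ≤ Real.exp (beta * c) := Real.one_le_exp (by positivity)
  have key : ∀ x : ℝ, Real.cosh (beta * gg gams lams mus r2 x) ≤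
      Real.exp (beta * c) * Real.cosh (beta * gg gams lams mus r1 x) := by
    intro x
    have hgle := gg_le_add (lams := lams) (mus := mus) (x := x) hgams hr1 h12
    have hb : (0:ℝ) ≤ beta * gg gams lams mus r1 x :=
      mul_nonneg hbeta.le (Real.sqrt_nonneg _)
    have ha0 : (0:ℝ) ≤ beta * gg gams lams mus r2 x :=
      mul_nonneg hbeta.le (Real.sqrt_nonneg _)
    have h := cosh_mul_exp_bound (a := beta * gg gams lams mus r2 x)
      (b := beta * gg gams lams mus r1 x) (d := beta * c)
      (by nlinarith [mul_le_mul_of_nonneg_left hgle hbeta.le]) hb (by positivity) ha0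
    linarith [h, mul_comm (Real.cosh (beta * gg gams lams mus r1 x)) (Real.exp (beta * c))]
  have t2 : ∀ (K a b : ℝ), 0 ≤ K → Real.cosh a ≤ Real.exp (beta * c) * Real.cosh b →
      K * Real.cosh a ≤ Real.exp (beta * c) * (K * Real.cosh b) := by
    intro K a b hK h
    calc K * Real.cosh a ≤ K * (Real.exp (beta * c) * Real.cosh b) :=
          mul_le_mul_of_nonneg_left h hK
      _ = Real.exp (beta * c) * (K * Real.cosh b) := by ring
  unfold ff
  exact sum6_le hE (by positivity) (by positivity) (by positivity)
    (t2 _ _ _ (Real.exp_nonneg _) (key 0))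
    (t2 _ _ _ (Real.exp_nonneg _) (key (4 * lam)))
    (t2 _ _ _ (by positivity) (key (2 * lam)))

lemma ff_mono (beta gams lams lamf lam mus muf hs hf eta : ℝ) {r1 r2 : ℝ}
    (hbeta : 0 < beta) (h1 : 0 ≤ r1) (h12 : r1 ≤ r2) :
    ff beta gams lams lamf lam mus muf hs hf eta r1 ≤
      ff beta gams lams lamf lam mus muf hs hf eta r2 := by
  have key : ∀ x : ℝ, Real.cosh (beta * gg gams lams mus r1 x) ≤
      Real.cosh (beta * gg gams lams mus r2 x) := by
    intro x
    have n1 : (0:ℝ) ≤ beta * gg gams lams mus r1 x := mul_nonneg hbeta.le (Real.sqrt_nonneg _)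
    have n2 : (0:ℝ) ≤ beta * gg gams lams mus r2 x := mul_nonneg hbeta.le (Real.sqrt_nonneg _)
    rw [Real.cosh_le_cosh, abs_of_nonneg n1, abs_of_nonneg n2]
    have : gg gams lams mus r1 x ≤ gg gams lams mus r2 x :=
      Real.sqrt_le_sqrt (by nlinarith [sq_nonneg gams])
    nlinarith
  unfold ff
  have k0 := key 0
  have k4 := key (4 * lam)
  have k2 := key (2 * lam)
  have p5 : (0:ℝ) ≤ Real.exp (-(beta * (lams + muf))) := Real.exp_nonneg _
  have p6 : (0:ℝ) ≤ Real.exp (-(beta * (4 * lam + lams + 2 * lamf - muf))) := Real.exp_nonneg _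
  have p7 : (0:ℝ) ≤ 2 * Real.exp (-(beta * (2 * lam + lams))) * Real.cosh (beta * hf) := by positivity
  nlinarith [mul_le_mul_of_nonneg_left k0 p5, mul_le_mul_of_nonneg_left k4 p6,
    mul_le_mul_of_nonneg_left k2 p7]

lemma FF_le (beta gams lams lamf lam mus muf hs hf eta : ℝ) {r1 r2 : ℝ}
    (hbeta : 0 < beta) (hgams : 0 < gams) (hr1 : 0 < r1) (h12 : r1 ≤ r2) :
    FF beta gams lams lamf lam mus muf hs hf eta r2 ≤
      FF beta gams lams lamf lam mus muf hs hf eta r1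
        - gams * (r2 - r1) + gams * (r2 - r1) / (2 * Real.sqrt r1) := by
  set c := gams * (r2 - r1) / (2 * Real.sqrt r1) with hcdef
  have hs1 : 0 < Real.sqrt r1 := Real.sqrt_pos.mpr hr1
  have hf1 : 0 < ff beta gams lams lamf lam mus muf hs hf eta r1 := ff_pos _ _ _ _ _ _ _ _ _ _ _
  have hf2 : 0 < ff beta gams lams lamf lam mus muf hs hf eta r2 := ff_pos _ _ _ _ _ _ _ _ _ _ _
  have hle := ff_le beta gams lams lamf lam mus muf hs hf eta hbeta hgams hr1 h12
  have hlog : Real.log (ff beta gams lams lamf lam mus muf hs hf eta r2) ≤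
      beta * c + Real.log (ff beta gams lams lamf lam mus muf hs hf eta r1) := by
    calc Real.log (ff beta gams lams lamf lam mus muf hs hf eta r2)
        ≤ Real.log (Real.exp (beta * c) * ff beta gams lams lamf lam mus muf hs hf eta r1) :=
          Real.log_le_log hf2 hle
      _ = beta * c + Real.log (ff beta gams lams lamf lam mus muf hs hf eta r1) := by
          rw [Real.log_mul (Real.exp_ne_zero _) hf1.ne', Real.log_exp]
  have h2 := mul_le_mul_of_nonneg_left hlog (inv_nonneg.mpr hbeta.le)
  have h3 : beta⁻¹ * (beta * c + Real.log (ff beta gams lams lamf lam mus muf hs hf eta r1))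
      = c + beta⁻¹ * Real.log (ff beta gams lams lamf lam mus muf hs hf eta r1) := by
    field_simp
  rw [h3] at h2
  unfold FF
  linarith

lemma FF_le_quarter (beta gams lams lamf lam mus muf hs hf eta : ℝ) {r : ℝ}
    (hbeta : 0 < beta) (hgams : 0 < gams) (hr : 1 / 4 ≤ r) :
    FF beta gams lams lamf lam mus muf hs hf eta r ≤
      FF beta gams lams lamf lam mus muf hs hf eta (1 / 4) := by
  have h := FF_le beta gams lams lamf lam mus muf hs hf eta hbeta hgams
    (by norm_num : (0:ℝ) < 1 / 4) hr
  have hsq : Real.sqrt (1 / 4 : ℝ) = 1 / 2 := by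
    rw [show (1 / 4 : ℝ) = (1 / 2) ^ 2 by norm_num, Real.sqrt_sq (by norm_num)]
  rw [hsq] at h
  norm_num at h
  linarith

/-- `F` is strictly decreasing on `(1/4, ∞)`; hence every maximizer
of `F` over `[0,∞)` lies in `[0, 1/4]`, and the sup over `[0,∞)` equals the sup
over `[0, 1/4]`. -/
theorem F_strictAnti_and_maximizer_le_quarter (beta gams lams lamf lam mus muf hs hf eta : ℝ) (hbeta : 0 < beta) (hgams : 0 < gams) (hlams : 0 ≤ lams) (hlamf : 0 ≤ lamf) (hlam : 0 ≤ lam) :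
    StrictAntiOn (fun r => FF beta gams lams lamf lam mus muf hs hf eta r) (Set.Ioi (1 / 4 : ℝ)) ∧
    (∀ rb : ℝ, 0 ≤ rb → (∀ r' : ℝ, 0 ≤ r' → FF beta gams lams lamf lam mus muf hs hf eta r' ≤ FF beta gams lams lamf lam mus muf hs hf eta rb) →
      rb ≤ 1 / 4) ∧
    sSup ((fun r => FF beta gams lams lamf lam mus muf hs hf eta r) '' Set.Ici 0) =
      sSup ((fun r => FF beta gams lams lamf lam mus muf hs hf eta r) '' Set.Icc 0 (1 / 4)) := by
  have hSA : StrictAntiOn (fun r => FF beta gams lams lamf lam mus muf hs hf eta r)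
      (Set.Ioi (1 / 4 : ℝ)) := by
    intro a ha b hb hab
    simp only [Set.mem_Ioi] at ha hb
    have ha0 : (0:ℝ) < a := by linarith
    have h := FF_le beta gams lams lamf lam mus muf hs hf eta hbeta hgams ha0 hab.le
    have hsa : (1:ℝ) / 2 < Real.sqrt a := by
      rw [show (1:ℝ)/2 = Real.sqrt ((1/2)^2) from (Real.sqrt_sq (by norm_num)).symm]
      exact Real.sqrt_lt_sqrt (by norm_num) (by norm_num; linarith)
    have hpos : 0 < gams * (b - a) := mul_pos hgams (by linarith)
    have hdiv : gams * (b - a) / (2 * Real.sqrt a) < gams * (b - a) :=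
      div_lt_self hpos (by linarith)
    simpa using lt_of_le_of_lt h (by linarith)
  refine ⟨hSA, ?_, ?_⟩
  · intro rb hrb hmax
    by_contra hcon
    push_neg at hcon
    set r' := (1 / 4 + rb) / 2 with hr'
    have h1 : r' ∈ Set.Ioi (1 / 4 : ℝ) := by simp only [Set.mem_Ioi]; linarith
    have h2 : rb ∈ Set.Ioi (1 / 4 : ℝ) := by simp only [Set.mem_Ioi]; linarith
    have h3 : r' < rb := by rw [hr']; linarith
    have h4 := hSA h1 h2 h3
    have h5 := hmax r' (by rw [hr']; linarith)
    simp only at h4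
    linarith
  · set Fn := fun r => FF beta gams lams lamf lam mus muf hs hf eta r with hFn
    have hbound : ∀ r : ℝ, 0 ≤ r →
        Fn r ≤ beta⁻¹ * Real.log (ff beta gams lams lamf lam mus muf hs hf eta (1 / 4)) := by
      intro r hr
      rcases le_total r (1 / 4) with h | h
      · have hm := ff_mono beta gams lams lamf lam mus muf hs hf eta hbeta hr h
        have hl := Real.log_le_log (ff_pos beta gams lams lamf lam mus muf hs hf eta r) hm
        have := mul_le_mul_of_nonneg_left hl (inv_nonneg.mpr hbeta.le)
        have hg : 0 ≤ gams * r := mul_nonneg hgams.le hr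
        simp only [hFn]
        unfold FF
        linarith
      · have hq := FF_le_quarter beta gams lams lamf lam mus muf hs hf eta hbeta hgams h
        have : FF beta gams lams lamf lam mus muf hs hf eta (1 / 4) ≤
            beta⁻¹ * Real.log (ff beta gams lams lamf lam mus muf hs hf eta (1 / 4)) := by
          unfold FF
          nlinarith
        simp only [hFn]
        linarith
    have hBsub : (Fn '' Set.Icc 0 (1 / 4)) ⊆ (Fn '' Set.Ici 0) :=
      Set.image_mono Set.Icc_subset_Ici_self
    have hAbdd : BddAbove (Fn '' Set.Ici 0) := by
      refine ⟨beta⁻¹ * Real.log (ff beta gams lams lamf lam mus muf hs hf eta (1 / 4)), ?_⟩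
      rintro y ⟨r, hr, rfl⟩
      exact hbound r hr
    have hBbdd : BddAbove (Fn '' Set.Icc 0 (1 / 4)) := hAbdd.mono hBsub
    have hAne : (Fn '' Set.Ici 0).Nonempty := ⟨Fn 0, ⟨0, Set.self_mem_Ici, rfl⟩⟩
    have hBne : (Fn '' Set.Icc 0 (1 / 4)).Nonempty := ⟨Fn 0, ⟨0, ⟨le_refl 0, by norm_num⟩, rfl⟩⟩
    refine le_antisymm ?_ (csSup_le_csSup hAbdd hBne hBsub)
    apply csSup_le hAne
    rintro y ⟨r, hr, rfl⟩
    rcases le_total r (1 / 4) with h | h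
    · exact le_csSup hBbdd ⟨r, ⟨hr, h⟩, rfl⟩
    · calc Fn r ≤ Fn (1 / 4) :=
            FF_le_quarter beta gams lams lamf lam mus muf hs hf eta hbeta hgams h
        _ ≤ sSup (Fn '' Set.Icc 0 (1 / 4)) :=
            le_csSup hBbdd ⟨1 / 4, ⟨by norm_num, le_refl _⟩, rfl⟩
end

section
/- (Density of the superconducting band.) Suppose that at the given parameter values the variational functional F has a unique maximizer r_β over [0,∞) and that r_β > 0. Then the map μ ↦ p(μ), obtained by letting μ_s = μ vary with all other parameters held fixed, is differentiable at μ = μ_s, and its derivative there equals d^{(s)} := 1 + (μ_s − λ_s)·G_0(r_β) + (μ_s − 2λ − λ_s)·G_1(r_β) + (μ_s − 4λ − λ_s)·G_2(r_β). -/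
open Real Filter

/-- `G_0`. -/
noncomputable def G0 (beta gams lams lamf lam mus muf hs hf eta r : ℝ) : ℝ :=
  Real.sinh (beta * gg gams lams mus r 0) /
    (ff beta gams lams lamf lam mus muf hs hf eta r * Real.exp (beta * (lams + muf))
      * gg gams lams mus r 0)

/-- `G_1`. -/
noncomputable def G1 (beta gams lams lamf lam mus muf hs hf eta r : ℝ) : ℝ :=
  2 * Real.cosh (beta * hf) * Real.sinh (beta * gg gams lams mus r (2 * lam)) /
    (ff beta gams lams lamf lam mus muf hs hf eta r * Real.exp (beta * (2 * lam + lams))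
      * gg gams lams mus r (2 * lam))

/-- `G_2`. -/
noncomputable def G2 (beta gams lams lamf lam mus muf hs hf eta r : ℝ) : ℝ :=
  Real.sinh (beta * gg gams lams mus r (4 * lam)) /
    (ff beta gams lams lamf lam mus muf hs hf eta r
      * Real.exp (beta * (4 * lam + lams + 2 * lamf - muf))
      * gg gams lams mus r (4 * lam))

/-- The grand-canonical pressure `p = β⁻¹ ln 2 + μ_s + μ_f + sup_{r ≥ 0} F(r)`. -/
noncomputable def pp (beta gams lams lamf lam mus muf hs hf eta : ℝ) : ℝ :=
  beta⁻¹ * Real.log 2 + mus + muf +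
    sSup ((fun r => FF beta gams lams lamf lam mus muf hs hf eta r) '' Set.Ici 0)

noncomputable def Dfun (beta gams lams lamf lam muf hs hf eta mu r : ℝ) : ℝ :=
  beta⁻¹ * ((Real.exp (-(beta * (lams + muf)))
      * (beta * (mu - lams) * Real.sinh (beta * gg gams lams mu r 0) / gg gams lams mu r 0)
    + Real.exp (-(beta * (4 * lam + lams + 2 * lamf - muf)))
      * (beta * (mu - 4 * lam - lams) * Real.sinh (beta * gg gams lams mu r (4 * lam))
          / gg gams lams mu r (4 * lam))
    + 2 * Real.exp (-(beta * (2 * lam + lams))) * Real.cosh (beta * hf)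
      * (beta * (mu - 2 * lam - lams) * Real.sinh (beta * gg gams lams mu r (2 * lam))
          / gg gams lams mu r (2 * lam)))
    / ff beta gams lams lamf lam mu muf hs hf eta r)

lemma gg_arg_pos (gams lams : ℝ) (hg : gams ≠ 0) (x r mu : ℝ) (hr : 0 < r) :
    0 < (x + lams - mu) ^ 2 + gams ^ 2 * r :=
  add_pos_of_nonneg_of_pos (sq_nonneg _) (by positivity)

lemma gg_pos (gams lams : ℝ) (hg : gams ≠ 0) (x r mu : ℝ) (hr : 0 < r) :
    0 < gg gams lams mu r x :=
  Real.sqrt_pos.2 (gg_arg_pos gams lams hg x r mu hr)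

lemma hasDerivAt_cosh_gg (beta gams lams : ℝ) (hg : gams ≠ 0) (x r mu : ℝ) (hr : 0 < r) :
    HasDerivAt (fun m => Real.cosh (beta * gg gams lams m r x))
      (beta * (mu - x - lams) * Real.sinh (beta * gg gams lams mu r x) / gg gams lams mu r x)
      mu := by
  have h1 : HasDerivAt (fun m : ℝ => x + lams - m) (-1) mu :=
    (hasDerivAt_id mu).const_sub (x + lams)
  have h2 : HasDerivAt (fun m : ℝ => (x + lams - m) ^ 2 + gams ^ 2 * r)
      ((2 : ℕ) * (x + lams - mu) ^ (2 - 1) * (-1)) mu := (h1.pow 2).add_const _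
  have hu := gg_arg_pos gams lams hg x r mu hr
  have h3 := h2.sqrt hu.ne'
  have h4 := (h3.const_mul beta).cosh
  have hgpos := gg_pos gams lams hg x r mu hr
  unfold gg at hgpos ⊢
  convert h4 using 1
  rw [pow_one]
  field_simp
  ring

lemma hasDerivAt_FF (beta gams lams lamf lam muf hs hf eta : ℝ) (hb : beta ≠ 0)
    (hg : gams ≠ 0) (r : ℝ) (hr : 0 < r) (mu : ℝ) :
    HasDerivAt (fun m => FF beta gams lams lamf lam m muf hs hf eta r)
      (Dfun beta gams lams lamf lam muf hs hf eta mu r) mu := by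
  have h0 := (hasDerivAt_cosh_gg beta gams lams hg 0 r mu hr).const_mul
    (Real.exp (-(beta * (lams + muf))))
  have h4 := (hasDerivAt_cosh_gg beta gams lams hg (4 * lam) r mu hr).const_mul
    (Real.exp (-(beta * (4 * lam + lams + 2 * lamf - muf))))
  have h2 := (hasDerivAt_cosh_gg beta gams lams hg (2 * lam) r mu hr).const_mul
    (2 * Real.exp (-(beta * (2 * lam + lams))) * Real.cosh (beta * hf))
  have hfd : HasDerivAt (fun m => ff beta gams lams lamf lam m muf hs hf eta r)
      (0 + Real.exp (-(beta * (lams + muf)))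
          * (beta * (mu - 0 - lams) * Real.sinh (beta * gg gams lams mu r 0)
              / gg gams lams mu r 0)
        + Real.exp (-(beta * (4 * lam + lams + 2 * lamf - muf)))
          * (beta * (mu - 4 * lam - lams) * Real.sinh (beta * gg gams lams mu r (4 * lam))
              / gg gams lams mu r (4 * lam))
        + 2 * Real.exp (-(beta * (2 * lam + lams))) * Real.cosh (beta * hf)
          * (beta * (mu - 2 * lam - lams) * Real.sinh (beta * gg gams lams mu r (2 * lam))
              / gg gams lams mu r (2 * lam))) mu := by
    unfold ff
    exact (((hasDerivAt_const mu _).add h0).add h4).add h2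
  have hlog := (hfd.log (ff_pos beta gams lams lamf lam mu muf hs hf eta r).ne').const_mul beta⁻¹
  have hfin := hlog.const_add (-(gams * r))
  unfold FF
  refine hfin.congr_deriv ?_
  unfold Dfun
  ring

lemma abs_sinh_le_cosh (x : ℝ) : |Real.sinh x| ≤ Real.cosh x := by
  rw [Real.abs_sinh, ← Real.cosh_abs x]
  exact (Real.sinh_lt_cosh _).le

lemma abs_le_gg (gams lams : ℝ) (x r mu : ℝ) (hr : 0 ≤ r) :
    |mu - x - lams| ≤ gg gams lams mu r x := by
  have h1 : |mu - x - lams| = Real.sqrt ((x + lams - mu) ^ 2) := by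
    rw [Real.sqrt_sq_eq_abs, abs_sub_comm]
    congr 1; ring
  rw [h1]
  exact Real.sqrt_le_sqrt (by nlinarith [sq_nonneg gams])

lemma term_bound (beta q g s c : ℝ) (hb : 0 < beta) (hgq : |q| ≤ g) (hg : 0 < g)
    (hsc : |s| ≤ c) : |beta * q * s / g| ≤ beta * c := by
  rw [abs_div, abs_mul, abs_mul, abs_of_pos hb, abs_of_pos hg, div_le_iff₀ hg]
  have h1 : |q| * |s| ≤ g * c := mul_le_mul hgq hsc (abs_nonneg s) hg.le
  nlinarith [abs_nonneg q, abs_nonneg s]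

lemma Dfun_abs_le (beta gams lams lamf lam muf hs hf eta mu r : ℝ) (hb : 0 < beta)
    (hg : gams ≠ 0) (hr : 0 < r) :
    |Dfun beta gams lams lamf lam muf hs hf eta mu r| ≤ 1 := by
  have hfpos := ff_pos beta gams lams lamf lam mu muf hs hf eta r
  have hg0 := gg_pos gams lams hg 0 r mu hr
  have hg4 := gg_pos gams lams hg (4 * lam) r mu hr
  have hg2 := gg_pos gams lams hg (2 * lam) r mu hr
  have e0 : (0:ℝ) < Real.exp (-(beta * (lams + muf))) := Real.exp_pos _
  have e4 : (0:ℝ) < Real.exp (-(beta * (4 * lam + lams + 2 * lamf - muf))) := Real.exp_pos _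
  have e2 : (0:ℝ) < 2 * Real.exp (-(beta * (2 * lam + lams))) * Real.cosh (beta * hf) := by
    positivity
  have b0 : |beta * (mu - lams) * Real.sinh (beta * gg gams lams mu r 0) / gg gams lams mu r 0|
      ≤ beta * Real.cosh (beta * gg gams lams mu r 0) := by
    apply term_bound _ _ _ _ _ hb _ hg0 (abs_sinh_le_cosh _)
    have := abs_le_gg gams lams 0 r mu hr.le
    simpa using this
  have b4 : |beta * (mu - 4 * lam - lams) * Real.sinh (beta * gg gams lams mu r (4 * lam))
      / gg gams lams mu r (4 * lam)|
      ≤ beta * Real.cosh (beta * gg gams lams mu r (4 * lam)) :=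
    term_bound _ _ _ _ _ hb (abs_le_gg gams lams (4 * lam) r mu hr.le) hg4 (abs_sinh_le_cosh _)
  have b2 : |beta * (mu - 2 * lam - lams) * Real.sinh (beta * gg gams lams mu r (2 * lam))
      / gg gams lams mu r (2 * lam)|
      ≤ beta * Real.cosh (beta * gg gams lams mu r (2 * lam)) :=
    term_bound _ _ _ _ _ hb (abs_le_gg gams lams (2 * lam) r mu hr.le) hg2 (abs_sinh_le_cosh _)
  -- numerator bound
  set t0 := Real.exp (-(beta * (lams + muf)))
      * (beta * (mu - lams) * Real.sinh (beta * gg gams lams mu r 0) / gg gams lams mu r 0)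
  set t4 := Real.exp (-(beta * (4 * lam + lams + 2 * lamf - muf)))
      * (beta * (mu - 4 * lam - lams) * Real.sinh (beta * gg gams lams mu r (4 * lam))
          / gg gams lams mu r (4 * lam))
  set t2 := 2 * Real.exp (-(beta * (2 * lam + lams))) * Real.cosh (beta * hf)
      * (beta * (mu - 2 * lam - lams) * Real.sinh (beta * gg gams lams mu r (2 * lam))
          / gg gams lams mu r (2 * lam))
  have hnum : |t0 + t4 + t2| ≤ beta * ff beta gams lams lamf lam mu muf hs hf eta r := by
    have h0 : |t0| ≤ Real.exp (-(beta * (lams + muf)))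
        * (beta * Real.cosh (beta * gg gams lams mu r 0)) := by
      rw [abs_mul, abs_of_pos e0]
      exact mul_le_mul_of_nonneg_left b0 e0.le
    have h4 : |t4| ≤ Real.exp (-(beta * (4 * lam + lams + 2 * lamf - muf)))
        * (beta * Real.cosh (beta * gg gams lams mu r (4 * lam))) := by
      rw [abs_mul, abs_of_pos e4]
      exact mul_le_mul_of_nonneg_left b4 e4.le
    have h2 : |t2| ≤ 2 * Real.exp (-(beta * (2 * lam + lams))) * Real.cosh (beta * hf)
        * (beta * Real.cosh (beta * gg gams lams mu r (2 * lam))) := by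
      rw [abs_mul, abs_of_pos e2]
      exact mul_le_mul_of_nonneg_left b2 e2.le
    have htri : |t0 + t4 + t2| ≤ |t0| + |t4| + |t2| := by
      calc |t0 + t4 + t2| ≤ |t0 + t4| + |t2| := abs_add_le _ _
        _ ≤ |t0| + |t4| + |t2| := by linarith [abs_add_le t0 t4]
    unfold ff
    have hA1 : (0:ℝ) ≤ (Real.exp (-(beta * muf)) + Real.exp (-(beta * (4 * lam + 2 * lamf - muf))))
        * Real.cosh (beta * hs) := by positivity
    have hA2 : (0:ℝ) ≤ Real.exp (-(beta * (2 * lam - hs))) * Real.cosh (beta * (eta + hf)) := by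
      positivity
    have hA3 : (0:ℝ) ≤ Real.exp (-(beta * (2 * lam + hs))) * Real.cosh (beta * (eta - hf)) := by
      positivity
    nlinarith [h0, h4, h2, htri, hb.le]
  -- final
  unfold Dfun
  rw [abs_mul, abs_of_pos (inv_pos.2 hb), abs_div, abs_of_pos hfpos]
  
  calc beta⁻¹ * (|t0 + t4 + t2| / ff beta gams lams lamf lam mu muf hs hf eta r)
      ≤ beta⁻¹ * ((beta * ff beta gams lams lamf lam mu muf hs hf eta r)
          / ff beta gams lams lamf lam mu muf hs hf eta r) := by
        gcongr
    _ = 1 := by field_simp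

lemma ff_cont2 (beta gams lams lamf lam muf hs hf eta : ℝ) :
    Continuous (fun p : ℝ × ℝ => ff beta gams lams lamf lam p.1 muf hs hf eta p.2) := by
  unfold ff gg; fun_prop

lemma gg_nonneg (gams lams mu r x : ℝ) : 0 ≤ gg gams lams mu r x := Real.sqrt_nonneg _

lemma ff_cont1 (beta gams lams lamf lam mu muf hs hf eta : ℝ) :
    Continuous (fun r => ff beta gams lams lamf lam mu muf hs hf eta r) := by
  unfold ff gg; fun_prop

lemma FF_cont_r (beta gams lams lamf lam mu muf hs hf eta : ℝ) :
    Continuous (fun r => FF beta gams lams lamf lam mu muf hs hf eta r) := by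
  have h2 : Continuous (fun r => Real.log (ff beta gams lams lamf lam mu muf hs hf eta r)) :=
    (ff_cont1 beta gams lams lamf lam mu muf hs hf eta).log fun x =>
      (ff_pos beta gams lams lamf lam mu muf hs hf eta x).ne'
  unfold FF
  exact ((continuous_const.mul continuous_id).neg).add (continuous_const.mul h2)

lemma FF_lip (beta gams lams lamf lam muf hs hf eta : ℝ) (hb : 0 < beta) (hg : gams ≠ 0) :
    ∀ mu mu' r : ℝ, 0 ≤ r →
      |FF beta gams lams lamf lam mu muf hs hf eta r
        - FF beta gams lams lamf lam mu' muf hs hf eta r| ≤ |mu - mu'| := by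
  have main : ∀ mu mu' r : ℝ, 0 < r →
      |FF beta gams lams lamf lam mu muf hs hf eta r
        - FF beta gams lams lamf lam mu' muf hs hf eta r| ≤ |mu - mu'| := by
    intro mu mu' r hr
    have h := convex_univ.norm_image_sub_le_of_norm_hasDerivWithin_le
      (f := fun m => FF beta gams lams lamf lam m muf hs hf eta r)
      (f' := fun m => Dfun beta gams lams lamf lam muf hs hf eta m r) (C := 1)
      (fun m _ => (hasDerivAt_FF beta gams lams lamf lam muf hs hf eta hb.ne' hg r hr
        m).hasDerivWithinAt)
      (fun m _ => by
        rw [Real.norm_eq_abs]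
        exact Dfun_abs_le beta gams lams lamf lam muf hs hf eta m r hb hg hr)
      (Set.mem_univ mu') (Set.mem_univ mu)
    simpa [Real.norm_eq_abs] using h
  intro mu mu' r hr
  rcases hr.lt_or_eq with h | h
  · exact main mu mu' r h
  · subst h
    have htend : Tendsto (fun t => |FF beta gams lams lamf lam mu muf hs hf eta t
        - FF beta gams lams lamf lam mu' muf hs hf eta t|) (nhdsWithin 0 (Set.Ioi 0))
        (nhds (|FF beta gams lams lamf lam mu muf hs hf eta 0
        - FF beta gams lams lamf lam mu' muf hs hf eta 0|)) := by
      apply ContinuousAt.continuousWithinAt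
      exact (((FF_cont_r beta gams lams lamf lam mu muf hs hf eta).sub
        (FF_cont_r beta gams lams lamf lam mu' muf hs hf eta)).abs).continuousAt
    refine le_of_tendsto htend ?_
    filter_upwards [self_mem_nhdsWithin] with t ht
    exact main mu mu' t ht

lemma sqrt_add_le' (a b : ℝ) (ha : 0 ≤ a) (hb : 0 ≤ b) :
    Real.sqrt (a + b) ≤ Real.sqrt a + Real.sqrt b := by
  nlinarith [Real.sq_sqrt ha, Real.sq_sqrt hb, Real.sq_sqrt (by linarith : (0:ℝ) ≤ a + b),
    Real.sqrt_nonneg a, Real.sqrt_nonneg b, Real.sqrt_nonneg (a+b),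
    sq_nonneg (Real.sqrt a + Real.sqrt b - Real.sqrt (a+b))]

lemma cosh_le_exp' (x : ℝ) (hx : 0 ≤ x) : Real.cosh x ≤ Real.exp x := by
  rw [Real.cosh_eq]
  have : Real.exp (-x) ≤ Real.exp x := Real.exp_le_exp.2 (by linarith)
  linarith

lemma gg_le (gams lams : ℝ) (hg : 0 < gams) (x r mu : ℝ) (hr : 0 ≤ r) :
    gg gams lams mu r x ≤ |x + lams - mu| + gams * Real.sqrt r := by
  unfold gg
  calc Real.sqrt ((x + lams - mu) ^ 2 + gams ^ 2 * r)
      ≤ Real.sqrt ((x + lams - mu) ^ 2) + Real.sqrt (gams ^ 2 * r) :=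
        sqrt_add_le' _ _ (sq_nonneg _) (by positivity)
    _ = |x + lams - mu| + gams * Real.sqrt r := by
        rw [Real.sqrt_sq_eq_abs, Real.sqrt_mul (sq_nonneg gams), Real.sqrt_sq hg.le]

lemma FF_coer (beta gams lams lamf lam mu muf hs hf eta : ℝ) (hb : 0 < beta) (hg : 0 < gams) :
    ∀ M : ℝ, ∃ R : ℝ, ∀ r : ℝ, R ≤ r → FF beta gams lams lamf lam mu muf hs hf eta r ≤ M := by
  intro M
  set A := (Real.exp (-(beta * muf)) + Real.exp (-(beta * (4 * lam + 2 * lamf - muf))))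
      * Real.cosh (beta * hs)
    + Real.exp (-(beta * (2 * lam - hs))) * Real.cosh (beta * (eta + hf))
    + Real.exp (-(beta * (2 * lam + hs))) * Real.cosh (beta * (eta - hf)) with hA
  set C := A + Real.exp (-(beta * (lams + muf))) * Real.exp (beta * |0 + lams - mu|)
    + Real.exp (-(beta * (4 * lam + lams + 2 * lamf - muf)))
        * Real.exp (beta * |4 * lam + lams - mu|)
    + 2 * Real.exp (-(beta * (2 * lam + lams))) * Real.cosh (beta * hf)
        * Real.exp (beta * |2 * lam + lams - mu|) with hC
  have hApos : 0 < A := by rw [hA]; positivity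
  have hCpos : 0 < C := by
    rw [hC]; positivity
  have key : ∀ r : ℝ, 0 ≤ r → ff beta gams lams lamf lam mu muf hs hf eta r
      ≤ C * Real.exp (beta * gams * Real.sqrt r) := by
    intro r hr
    have hE : 1 ≤ Real.exp (beta * gams * Real.sqrt r) := Real.one_le_exp (by positivity)
    have hterm : ∀ x : ℝ, Real.cosh (beta * gg gams lams mu r x)
        ≤ Real.exp (beta * |x + lams - mu|) * Real.exp (beta * gams * Real.sqrt r) := by
      intro x
      have h1 : Real.cosh (beta * gg gams lams mu r x) ≤ Real.exp (beta * gg gams lams mu r x) :=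
        cosh_le_exp' _ (mul_nonneg hb.le (gg_nonneg gams lams mu r x))
      have h2 : beta * gg gams lams mu r x
          ≤ beta * |x + lams - mu| + beta * gams * Real.sqrt r := by
        have := gg_le gams lams hg x r mu hr
        nlinarith
      calc Real.cosh (beta * gg gams lams mu r x) ≤ Real.exp (beta * gg gams lams mu r x) := h1
        _ ≤ Real.exp (beta * |x + lams - mu| + beta * gams * Real.sqrt r) := Real.exp_le_exp.2 h2
        _ = Real.exp (beta * |x + lams - mu|) * Real.exp (beta * gams * Real.sqrt r) :=
          Real.exp_add _ _
    have h0 := hterm 0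
    have h4 := hterm (4 * lam)
    have h2 := hterm (2 * lam)
    have e0 : (0:ℝ) < Real.exp (-(beta * (lams + muf))) := Real.exp_pos _
    have e4 : (0:ℝ) < Real.exp (-(beta * (4 * lam + lams + 2 * lamf - muf))) := Real.exp_pos _
    have e2 : (0:ℝ) < 2 * Real.exp (-(beta * (2 * lam + lams))) * Real.cosh (beta * hf) := by
      positivity
    unfold ff
    rw [hC, hA]
    nlinarith [mul_le_mul_of_nonneg_left h0 e0.le, mul_le_mul_of_nonneg_left h4 e4.le,
      mul_le_mul_of_nonneg_left h2 e2.le, mul_le_mul_of_nonneg_left hE hApos.le, hApos, hE]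
  set L := beta⁻¹ * Real.log C with hL
  refine ⟨max 4 (2 * (L - M) / gams), ?_⟩
  intro r hrR
  have hr4 : (4:ℝ) ≤ r := le_trans (le_max_left _ _) hrR
  have hr0 : (0:ℝ) ≤ r := by linarith
  have hsq : Real.sqrt r ≤ r / 2 := by
    nlinarith [Real.sq_sqrt hr0, Real.sqrt_nonneg r, sq_nonneg (Real.sqrt r - 2)]
  have hlog : Real.log (ff beta gams lams lamf lam mu muf hs hf eta r)
      ≤ Real.log C + beta * gams * Real.sqrt r := by
    calc Real.log (ff beta gams lams lamf lam mu muf hs hf eta r)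
        ≤ Real.log (C * Real.exp (beta * gams * Real.sqrt r)) :=
          Real.log_le_log (ff_pos beta gams lams lamf lam mu muf hs hf eta r) (key r hr0)
      _ = Real.log C + beta * gams * Real.sqrt r := by
          rw [Real.log_mul hCpos.ne' (Real.exp_pos _).ne', Real.log_exp]
  have hFF : FF beta gams lams lamf lam mu muf hs hf eta r
      ≤ -(gams * r) + L + gams * Real.sqrt r := by
    unfold FF
    have := mul_le_mul_of_nonneg_left hlog (inv_pos.2 hb).le
    rw [hL]
    have hbb : beta⁻¹ * (beta * gams * Real.sqrt r) = gams * Real.sqrt r := by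
      field_simp
    nlinarith [this]
  have hgr : 2 * (L - M) ≤ r * gams := by
    have h1 : 2 * (L - M) / gams ≤ r := le_trans (le_max_right _ _) hrR
    exact (div_le_iff₀ hg).1 h1
  have : gams * Real.sqrt r ≤ gams * (r / 2) := mul_le_mul_of_nonneg_left hsq hg.le
  nlinarith

lemma Dfun_contAt (beta gams lams lamf lam muf hs hf eta : ℝ) (hg : gams ≠ 0)
    (mu0 rb : ℝ) (hrb : 0 < rb) :
    ContinuousAt (fun p : ℝ × ℝ => Dfun beta gams lams lamf lam muf hs hf eta p.1 p.2)
      (mu0, rb) := by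
  have hggc : ∀ x : ℝ, Continuous (fun p : ℝ × ℝ => gg gams lams p.1 p.2 x) := by
    intro x; unfold gg; fun_prop
  have hggne : ∀ x : ℝ, gg gams lams mu0 rb x ≠ 0 := fun x =>
    (gg_pos gams lams hg x rb mu0 hrb).ne'
  have hffc : Continuous (fun p : ℝ × ℝ => ff beta gams lams lamf lam p.1 muf hs hf eta p.2) := by
    unfold ff gg; fun_prop
  have hterm : ∀ (x : ℝ) (w : ℝ → ℝ), Continuous w → ContinuousAt (fun p : ℝ × ℝ =>
      beta * w p.1 * Real.sinh (beta * gg gams lams p.1 p.2 x) / gg gams lams p.1 p.2 x)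
      (mu0, rb) := by
    intro x w hw
    have hsc : Continuous fun p : ℝ × ℝ =>
        beta * w p.1 * Real.sinh (beta * gg gams lams p.1 p.2 x) := by
      unfold gg; fun_prop
    exact hsc.continuousAt.div (hggc x).continuousAt (hggne x)
  have c0 : ContinuousAt (fun p : ℝ × ℝ => Real.exp (-(beta * (lams + muf)))
      * (beta * (p.1 - lams) * Real.sinh (beta * gg gams lams p.1 p.2 0)
          / gg gams lams p.1 p.2 0)) (mu0, rb) :=
    continuousAt_const.mul (hterm 0 (fun m => m - lams) (by fun_prop))
  have c4 : ContinuousAt (fun p : ℝ × ℝ => Real.exp (-(beta * (4 * lam + lams + 2 * lamf - muf)))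
      * (beta * (p.1 - 4 * lam - lams) * Real.sinh (beta * gg gams lams p.1 p.2 (4 * lam))
          / gg gams lams p.1 p.2 (4 * lam))) (mu0, rb) :=
    continuousAt_const.mul (hterm (4 * lam) (fun m => m - 4 * lam - lams) (by fun_prop))
  have c2 : ContinuousAt (fun p : ℝ × ℝ => 2 * Real.exp (-(beta * (2 * lam + lams)))
      * Real.cosh (beta * hf)
      * (beta * (p.1 - 2 * lam - lams) * Real.sinh (beta * gg gams lams p.1 p.2 (2 * lam))
          / gg gams lams p.1 p.2 (2 * lam))) (mu0, rb) :=
    continuousAt_const.mul (hterm (2 * lam) (fun m => m - 2 * lam - lams) (by fun_prop))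
  unfold Dfun
  exact continuousAt_const.mul (ContinuousAt.div ((c0.add c4).add c2) hffc.continuousAt
    (ff_pos beta gams lams lamf lam mu0 muf hs hf eta rb).ne')

lemma Dfun_eq_G (beta gams lams lamf lam mus muf hs hf eta rb : ℝ) (hb : beta ≠ 0)
    (hg : gams ≠ 0) (hrb : 0 < rb) :
    Dfun beta gams lams lamf lam muf hs hf eta mus rb
      = (mus - lams) * G0 beta gams lams lamf lam mus muf hs hf eta rb
        + (mus - 2 * lam - lams) * G1 beta gams lams lamf lam mus muf hs hf eta rb
        + (mus - 4 * lam - lams) * G2 beta gams lams lamf lam mus muf hs hf eta rb := by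
  have h0 := (gg_pos gams lams hg 0 rb mus hrb).ne'
  have h4 := (gg_pos gams lams hg (4 * lam) rb mus hrb).ne'
  have h2 := (gg_pos gams lams hg (2 * lam) rb mus hrb).ne'
  have hffne := (ff_pos beta gams lams lamf lam mus muf hs hf eta rb).ne'
  unfold Dfun G0 G1 G2
  rw [Real.exp_neg, Real.exp_neg, Real.exp_neg]
  field_simp
  ring

lemma danskin (Φ D : ℝ → ℝ → ℝ) (mu0 rb d0 : ℝ) (hpos : 0 < rb)
    (hcont : Continuous (fun r => Φ mu0 r))
    (hlip : ∀ mu mu' r : ℝ, 0 ≤ r → |Φ mu r - Φ mu' r| ≤ |mu - mu'|)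
    (hderiv : ∀ mu r : ℝ, 0 < r → HasDerivAt (fun m => Φ m r) (D mu r) mu)
    (hDcont : ∀ ε : ℝ, 0 < ε → ∃ δ : ℝ, 0 < δ ∧ ∀ mu r : ℝ, |mu - mu0| ≤ δ → |r - rb| ≤ δ →
      |D mu r - d0| ≤ ε)
    (hcoer : ∀ M : ℝ, ∃ R : ℝ, ∀ r : ℝ, R ≤ r → Φ mu0 r ≤ M)
    (hmax : ∀ r : ℝ, 0 ≤ r → Φ mu0 r ≤ Φ mu0 rb)
    (hstrict : ∀ r : ℝ, 0 ≤ r → r ≠ rb → Φ mu0 r < Φ mu0 rb) :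
    HasDerivAt (fun mu => sSup ((fun r => Φ mu r) '' Set.Ici 0)) d0 mu0 := by
  set S : ℝ → ℝ := fun mu => sSup ((fun r => Φ mu r) '' Set.Ici 0) with hSdef
  have hne : ∀ mu : ℝ, ((fun r => Φ mu r) '' Set.Ici 0).Nonempty :=
    fun mu => ⟨Φ mu rb, ⟨rb, hpos.le, rfl⟩⟩
  have hub : ∀ mu r : ℝ, 0 ≤ r → Φ mu r ≤ Φ mu0 rb + |mu - mu0| := by
    intro mu r hr
    have h1 := (abs_le.1 (hlip mu mu0 r hr)).2
    have h2 := hmax r hr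
    linarith
  have hbdd : ∀ mu : ℝ, BddAbove ((fun r => Φ mu r) '' Set.Ici 0) := by
    intro mu
    refine ⟨Φ mu0 rb + |mu - mu0|, ?_⟩
    rintro y ⟨r, hr, rfl⟩
    exact hub mu r hr
  have hSge : ∀ mu r : ℝ, 0 ≤ r → Φ mu r ≤ S mu := fun mu r hr =>
    le_csSup (hbdd mu) ⟨r, hr, rfl⟩
  have hSle : ∀ mu : ℝ, S mu ≤ Φ mu0 rb + |mu - mu0| := by
    intro mu
    apply csSup_le (hne mu)
    rintro y ⟨r, hr, rfl⟩
    exact hub mu r hr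
  have hS0 : S mu0 = Φ mu0 rb := by
    refine le_antisymm ?_ (hSge mu0 rb hpos.le)
    have := hSle mu0
    simpa using this
  obtain ⟨R0, hR0⟩ := hcoer (Φ mu0 rb - 4)
  set R : ℝ := max R0 (rb + 1) with hRdef
  have key : ∀ ν : ℝ, 0 < ν → ν ≤ 1 → ∀ mu r : ℝ, |mu - mu0| ≤ ν → 0 ≤ r →
      S mu - ν ≤ Φ mu r → Φ mu0 rb - 3 * ν ≤ Φ mu0 r ∧ r ≤ R := by
    intro ν hν hν1 mu r hmu hr hΦ
    have l1 := (abs_le.1 (hlip mu mu0 r hr)).2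
    have l2 := (abs_le.1 (hlip mu mu0 rb hpos.le)).1
    have l3 : Φ mu rb ≤ S mu := hSge mu rb hpos.le
    have h1 : Φ mu0 rb - 3 * ν ≤ Φ mu0 r := by linarith
    refine ⟨h1, ?_⟩
    by_contra hRr
    push_neg at hRr
    have h2 : Φ mu0 r ≤ Φ mu0 rb - 4 := hR0 r (le_trans (le_max_left _ _) hRr.le)
    linarith
  have loc : ∀ δ : ℝ, 0 < δ → ∃ ν : ℝ, 0 < ν ∧ ∀ mu r : ℝ, |mu - mu0| ≤ ν → 0 ≤ r →
      S mu - ν ≤ Φ mu r → |r - rb| ≤ δ := by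
    intro δ hδ
    set K : Set ℝ := Set.Icc 0 R ∩ {r : ℝ | δ ≤ |r - rb|} with hKdef
    have hKcl : IsCompact K := (isCompact_Icc).inter_right
      (isClosed_le continuous_const (by fun_prop))
    by_cases hKne : K.Nonempty
    · obtain ⟨rs, hrsK, hrsmax⟩ := hKcl.exists_isMaxOn hKne hcont.continuousOn
      have hrs0 : (0:ℝ) ≤ rs := hrsK.1.1
      have hrsne : rs ≠ rb := by
        intro h
        have := hrsK.2
        rw [h] at this
        simp only [Set.mem_setOf_eq, sub_self, abs_zero] at this
        linarith
      have hgap : 0 < Φ mu0 rb - Φ mu0 rs := sub_pos.2 (hstrict rs hrs0 hrsne)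
      set d' := Φ mu0 rb - Φ mu0 rs with hd'
      refine ⟨min 1 (d' / 4), lt_min one_pos (by linarith), ?_⟩
      intro mu r hmu hr hΦ
      have hν1 : min 1 (d' / 4) ≤ 1 := min_le_left _ _
      have hνd : min 1 (d' / 4) ≤ d' / 4 := min_le_right _ _
      obtain ⟨h1, h2⟩ := key (min 1 (d' / 4)) (lt_min one_pos (by linarith)) hν1 mu r hmu hr hΦ
      by_contra habs
      push_neg at habs
      have hrK : r ∈ K := ⟨⟨hr, h2⟩, habs.le⟩
      have h3 : Φ mu0 r ≤ Φ mu0 rs := hrsmax hrK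
      linarith
    · refine ⟨1, one_pos, ?_⟩
      intro mu r hmu hr hΦ
      obtain ⟨-, h2⟩ := key 1 one_pos le_rfl mu r hmu hr hΦ
      by_contra habs
      push_neg at habs
      exact hKne ⟨r, ⟨hr, h2⟩, habs.le⟩
  -- mean value inequality
  have mvt : ∀ δ ε : ℝ, 0 < ε →
      (∀ mu r : ℝ, |mu - mu0| ≤ δ → |r - rb| ≤ δ → |D mu r - d0| ≤ ε) →
      ∀ mu r : ℝ, |mu - mu0| ≤ δ → |r - rb| ≤ δ → 0 < r →
      |Φ mu r - Φ mu0 r - (mu - mu0) * d0| ≤ ε * |mu - mu0| := by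
    intro δ ε hε hD mu r hmu hr hrpos
    have hδ0 : 0 ≤ δ := le_trans (abs_nonneg _) hmu
    have hder : ∀ m ∈ Metric.closedBall mu0 δ,
        HasDerivWithinAt (fun m => Φ m r - m * d0) (D m r - d0) (Metric.closedBall mu0 δ) m :=
      fun m _ => by
        have h := ((hderiv m r hrpos).sub ((hasDerivAt_id m).mul_const d0)).hasDerivWithinAt
          (s := Metric.closedBall mu0 δ)
        exact h.congr_deriv (by ring)
    have hbound : ∀ m ∈ Metric.closedBall mu0 δ, ‖D m r - d0‖ ≤ ε := by
      intro m hm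
      rw [Real.norm_eq_abs]
      exact hD m r (by rwa [Metric.mem_closedBall, Real.dist_eq] at hm) hr
    have hmem : mu ∈ Metric.closedBall mu0 δ := by
      rw [Metric.mem_closedBall, Real.dist_eq]; exact hmu
    have hmem0 : mu0 ∈ Metric.closedBall mu0 δ := Metric.mem_closedBall_self hδ0
    have h := (convex_closedBall mu0 δ).norm_image_sub_le_of_norm_hasDerivWithin_le
      hder hbound hmem0 hmem
    have h2 : Φ mu r - mu * d0 - (Φ mu0 r - mu0 * d0) = Φ mu r - Φ mu0 r - (mu - mu0) * d0 := by
      ring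
    simp only [Real.norm_eq_abs] at h
    rw [h2] at h
    exact h
  -- conclusion
  rw [hasDerivAt_iff_isLittleO, Asymptotics.isLittleO_iff]
  intro c hc
  obtain ⟨δ1, hδ1, hD⟩ := hDcont (c / 3) (by linarith)
  set δ := min δ1 (rb / 2) with hδdef
  have hδpos : 0 < δ := lt_min hδ1 (by linarith)
  have hD' : ∀ mu r : ℝ, |mu - mu0| ≤ δ → |r - rb| ≤ δ → |D mu r - d0| ≤ c / 3 :=
    fun mu r h1 h2 => hD mu r (h1.trans (min_le_left _ _)) (h2.trans (min_le_left _ _))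
  obtain ⟨ν, hν, hloc⟩ := loc δ hδpos
  rw [Metric.eventually_nhds_iff]
  refine ⟨min δ ν, lt_min hδpos hν, ?_⟩
  intro mu hmudist
  rw [Real.dist_eq] at hmudist
  by_cases hmueq : mu = mu0
  · subst hmueq
    simp
  · have ht : 0 < |mu - mu0| := abs_pos.2 (sub_ne_zero.2 hmueq)
    have hmuδ : |mu - mu0| ≤ δ := le_trans hmudist.le (min_le_left _ _)
    have hmuν : |mu - mu0| ≤ ν := le_trans hmudist.le (min_le_right _ _)
    -- lower bound
    have hmvtb := mvt δ (c / 3) (by linarith) hD' mu rb hmuδ (by simp [hδpos.le]) hpos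
    have low : (mu - mu0) * d0 - (c / 3) * |mu - mu0| ≤ S mu - S mu0 := by
      have h2 := hSge mu rb hpos.le
      rw [hS0]
      have := (abs_le.1 hmvtb).1
      linarith
    -- upper bound
    have hslack : 0 < min ν ((c / 3) * |mu - mu0|) := lt_min hν (by positivity)
    obtain ⟨y, hymem, hy⟩ := exists_lt_of_lt_csSup (hne mu)
      (show S mu - min ν ((c / 3) * |mu - mu0|) < S mu by linarith)
    obtain ⟨r', hr', rfl⟩ := hymem
    have hrloc : |r' - rb| ≤ δ := by
      apply hloc mu r' hmuν hr'
      have := min_le_left ν ((c / 3) * |mu - mu0|)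
      linarith
    have hr'pos : 0 < r' := by
      have h1 : |r' - rb| ≤ rb / 2 := hrloc.trans (min_le_right _ _)
      have := (abs_le.1 h1).1
      linarith
    have hmvtu := mvt δ (c / 3) (by linarith) hD' mu r' hmuδ hrloc hr'pos
    have high : S mu - S mu0 ≤ (mu - mu0) * d0 + (c / 3) * |mu - mu0| + (c / 3) * |mu - mu0| := by
      have h3 : Φ mu0 r' ≤ Φ mu0 rb := hmax r' hr'
      have h4 : S mu ≤ Φ mu r' + (c / 3) * |mu - mu0| := by
        have := min_le_right ν ((c / 3) * |mu - mu0|)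
        linarith
      rw [hS0]
      have := (abs_le.1 hmvtu).2
      linarith
    rw [Real.norm_eq_abs, Real.norm_eq_abs, smul_eq_mul, abs_le]
    have hc3 : (c / 3) * |mu - mu0| + (c / 3) * |mu - mu0| + (c / 3) * |mu - mu0|
        ≤ c * |mu - mu0| := by nlinarith
    constructor
    · nlinarith
    · nlinarith

/-- density of the superconducting band: if `F` has a unique
maximizer `rb > 0`, then `μ ↦ p(μ)` (varying `μ_s`) is differentiable at `μ_s`
with derivative `d⁽ˢ⁾ = 1 + (μ_s − λ_s)G_0(rb) + (μ_s − 2λ − λ_s)G_1(rb)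
+ (μ_s − 4λ − λ_s)G_2(rb)`. -/
theorem pressure_deriv_mus (beta gams lams lamf lam mus muf hs hf eta : ℝ) (hbeta : 0 < beta) (hgams : 0 < gams) (hlams : 0 ≤ lams) (hlamf : 0 ≤ lamf) (hlam : 0 ≤ lam)
    (rb : ℝ) (hpos : 0 < rb) (hrb : 0 ≤ rb) (hmax : ∀ r' : ℝ, 0 ≤ r' → FF beta gams lams lamf lam mus muf hs hf eta r' ≤ FF beta gams lams lamf lam mus muf hs hf eta rb)
    (huniq : ∀ r : ℝ, 0 ≤ r → (∀ r' : ℝ, 0 ≤ r' → FF beta gams lams lamf lam mus muf hs hf eta r' ≤ FF beta gams lams lamf lam mus muf hs hf eta r) → r = rb) :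
    HasDerivAt (fun mu => pp beta gams lams lamf lam mu muf hs hf eta)
      (1 + (mus - lams) * G0 beta gams lams lamf lam mus muf hs hf eta rb
        + (mus - 2 * lam - lams) * G1 beta gams lams lamf lam mus muf hs hf eta rb
        + (mus - 4 * lam - lams) * G2 beta gams lams lamf lam mus muf hs hf eta rb) mus := by
  have hbne : beta ≠ 0 := hbeta.ne'
  have hgne : gams ≠ 0 := hgams.ne'
  have hstrict : ∀ r : ℝ, 0 ≤ r → r ≠ rb →
      FF beta gams lams lamf lam mus muf hs hf eta r
        < FF beta gams lams lamf lam mus muf hs hf eta rb := by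
    intro r hr hne
    rcases lt_or_eq_of_le (hmax r hr) with h | h
    · exact h
    · exact absurd (huniq r hr (fun r' hr' => (hmax r' hr').trans_eq h.symm)) hne
  have hDc : ∀ ε : ℝ, 0 < ε → ∃ δ : ℝ, 0 < δ ∧ ∀ mu r : ℝ, |mu - mus| ≤ δ → |r - rb| ≤ δ →
      |Dfun beta gams lams lamf lam muf hs hf eta mu r
        - Dfun beta gams lams lamf lam muf hs hf eta mus rb| ≤ ε := by
    intro ε hε
    obtain ⟨δ, hδ, h⟩ := Metric.continuousAt_iff.1
      (Dfun_contAt beta gams lams lamf lam muf hs hf eta hgne mus rb hpos) ε hε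
    refine ⟨δ / 2, by linarith, fun mu r h1 h2 => ?_⟩
    have hd : dist ((mu, r) : ℝ × ℝ) ((mus, rb) : ℝ × ℝ) < δ := by
      rw [Prod.dist_eq]
      apply max_lt <;> rw [Real.dist_eq] <;> linarith
    have h3 := h hd
    rw [Real.dist_eq] at h3
    exact h3.le
  have hS := danskin (fun mu r => FF beta gams lams lamf lam mu muf hs hf eta r)
    (fun mu r => Dfun beta gams lams lamf lam muf hs hf eta mu r) mus rb
    (Dfun beta gams lams lamf lam muf hs hf eta mus rb) hpos
    (FF_cont_r beta gams lams lamf lam mus muf hs hf eta)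
    (fun mu mu' r hr => FF_lip beta gams lams lamf lam muf hs hf eta hbeta hgne mu mu' r hr)
    (fun mu r hr => hasDerivAt_FF beta gams lams lamf lam muf hs hf eta hbne hgne r hr mu)
    hDc
    (FF_coer beta gams lams lamf lam mus muf hs hf eta hbeta hgams)
    hmax hstrict
  have hpp : HasDerivAt (fun mu => pp beta gams lams lamf lam mu muf hs hf eta)
      (0 + 1 + Dfun beta gams lams lamf lam muf hs hf eta mus rb) mus := by
    unfold pp
    exact (((hasDerivAt_const mus (beta⁻¹ * Real.log 2)).add
      (hasDerivAt_id mus)).add_const muf).add hS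
  convert hpp using 1
  rw [Dfun_eq_G beta gams lams lamf lam mus muf hs hf eta rb hbne hgne hpos]
  ring
end
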